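/- Let (|a_i⟩)_{i=1}^N and (|b_j⟩)_{j=1}^N be two orthonormal bases of ℂ^N with transition matrix U_{ij} = ⟨a_i|b_j⟩, and let Q = (R_1, R_2−R_1, R_3−R_2, …, R_N−R_{N−1}). Then for any unit vector |ψ⟩ ∈ ℂ^N, the probability vectors p^ψ and q^ψ satisfy the majorization relation p^ψ ⊗ q^ψ ≺ Q, where p^ψ ⊗ q^ψ is the N²-dimensional vector with entries p_i^ψ · q_j^ψ (and Q is padded with zeros to length N²). -/

import Mathlib

/-- The measurable space structure on matrices (the product σ-algebra, which coincides with the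
Borel σ-algebra). -/
instance {m n α : Type*} [MeasurableSpace α] : MeasurableSpace (Matrix m n α) :=
  inferInstanceAs (MeasurableSpace (m → n → α))

/-- The operator norm (largest singular value) of a rectangular complex matrix, i.e. the norm of
the induced linear map between Euclidean spaces. -/
noncomputable def opNorm {m n : Type*} [Fintype m] [Fintype n] [DecidableEq n]
    (M : Matrix m n ℂ) : ℝ :=
  ‖LinearMap.toContinuousLinearMap (Matrix.toEuclideanLin M)‖

/-- `‖Û^(n,m)‖`: the maximal operator norm of an `n × m` submatrix of the `N × N` matrix `U`,
the maximum being taken over all choices of `n` rows and `m` columns. -/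
noncomputable def maxSubNorm (N n m : ℕ) (U : Matrix (Fin N) (Fin N) ℂ) : ℝ :=
  ⨆ f : Fin n ↪ Fin N, ⨆ g : Fin m ↪ Fin N, opNorm (U.submatrix f g)

/-- `s_k = max{‖Û^(1,k)‖, ‖Û^(2,k−1)‖, …, ‖Û^(k,1)‖}`, the maximal operator norm of a
submatrix of `U` with `n + m = k + 1` rows and columns (`n, m ≥ 1`).  By convention `s_0 = 0`
(the supremum over the empty range). -/
noncomputable def sk (N : ℕ) (U : Matrix (Fin N) (Fin N) ℂ) (k : ℕ) : ℝ :=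
  ⨆ a : Fin k, maxSubNorm N (a.1 + 1) (k - a.1) U

/-- For a vector `x` with nonnegative entries, `topSum x k` is the sum of the `k` largest
coordinates of `x` (the maximum of `∑_{i ∈ s} x i` over subsets `s` with `|s| ≤ k`; for
`k ≥ card ι` it equals the total sum, which corresponds to padding `x` with zeros). -/
noncomputable def topSum {ι : Type*} [Fintype ι] (x : ι → ℝ) (k : ℕ) : ℝ :=
  ⨆ s : {s : Finset ι // s.card ≤ k}, ∑ i ∈ s.1, x i

/-- Majorization `x ≺ y` for vectors with nonnegative coordinates (the index types may
differ; this amounts to padding the shorter vector with zeros): for every `k`, the sum of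
the `k` largest coordinates of `x` is at most the sum of the `k` largest coordinates of `y`,
and the total sums of coordinates agree. -/
def Majorizes {ι κ : Type*} [Fintype ι] [Fintype κ] (x : ι → ℝ) (y : κ → ℝ) : Prop :=
  (∀ k : ℕ, topSum x k ≤ topSum y k) ∧ ∑ i, x i = ∑ j, y j

/-- `R_k = ((1 + s_k)/2)²` for `1 ≤ k ≤ N`, with the convention `R_0 = 0`. -/
noncomputable def Rcoef (N : ℕ) (U : Matrix (Fin N) (Fin N) ℂ) (k : ℕ) : ℝ :=
  if k = 0 then 0 else ((1 + sk N U k) / 2) ^ 2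

/-- The vector `Q = (R_1, R_2 − R_1, …, R_N − R_{N−1})`, indexed by `i : Fin N`. -/
noncomputable def Qvec (N : ℕ) (U : Matrix (Fin N) (Fin N) ℂ) (i : Fin N) : ℝ :=
  Rcoef N U (i.1 + 1) - Rcoef N U i.1

/-! ### Auxiliary lemmas -/

section TopSum
variable {ι : Type*} [Fintype ι] {x : ι → ℝ} {k : ℕ}

instance : Nonempty {s : Finset ι // s.card ≤ k} := ⟨⟨∅, by simp⟩⟩

lemma topSum_le {C : ℝ} (h : ∀ s : Finset ι, s.card ≤ k → ∑ i ∈ s, x i ≤ C) :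
    topSum x k ≤ C :=
  ciSup_le fun s => h s.1 s.2

lemma le_topSum (s : Finset ι) (h : s.card ≤ k) : ∑ i ∈ s, x i ≤ topSum x k :=
  le_ciSup (f := fun s : {s : Finset ι // s.card ≤ k} => ∑ i ∈ s.1, x i)
    (Set.Finite.bddAbove (Set.finite_range _)) ⟨s, h⟩

end TopSum

lemma toEuclideanLin_apply' {m n : Type*} [Fintype m] [Fintype n] [DecidableEq n]
    (M : Matrix m n ℂ) (x : EuclideanSpace ℂ n) (i : m) :
    (Matrix.toEuclideanLin M x) i = ∑ j, M i j * x j := by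
  simp [Matrix.toEuclideanLin, Matrix.mulVec, dotProduct]

lemma norm_mulVec_le {m n : Type*} [Fintype m] [Fintype n] [DecidableEq n]
    (M : Matrix m n ℂ) (x : EuclideanSpace ℂ n) :
    ‖Matrix.toEuclideanLin M x‖ ≤ opNorm M * ‖x‖ := by
  have := (LinearMap.toContinuousLinearMap (Matrix.toEuclideanLin M)).le_opNorm x
  simpa [opNorm] using this

lemma conj_mul_self' (z : ℂ) : (starRingEnd ℂ) z * z = ((‖z‖^2 : ℝ) : ℂ) := by
  rw [mul_comm, Complex.mul_conj, Complex.normSq_eq_norm_sq]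

lemma euclidean_norm_sq {n : Type*} [Fintype n] (z : EuclideanSpace ℂ n) :
    ‖z‖^2 = ∑ i, ‖z i‖^2 := by
  rw [EuclideanSpace.norm_eq, Real.sq_sqrt (Finset.sum_nonneg fun i _ => sq_nonneg _)]

lemma cinner_apply {n : Type*} [Fintype n] (z w : EuclideanSpace ℂ n) :
    (inner ℂ z w : ℂ) = ∑ i, (starRingEnd ℂ) (z i) * w i := by
  rw [PiLp.inner_apply]
  exact Finset.sum_congr rfl fun i _ => by simp [RCLike.inner_apply, mul_comm]

lemma bddFin {α : Type*} [Finite α] (f : α → ℝ) : BddAbove (Set.range f) :=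
  Set.Finite.bddAbove (Set.finite_range f)

section Iso
variable {N : ℕ} {U : Matrix (Fin N) (Fin N) ℂ}
  (hcol : ∀ j j' : Fin N, ∑ l, (starRingEnd ℂ) (U l j) * U l j' = if j = j' then 1 else 0)

include hcol in
lemma mulVec_normsq (w : EuclideanSpace ℂ (Fin N)) :
    ∑ i, ‖(Matrix.toEuclideanLin U w) i‖^2 = ∑ j, ‖w j‖^2 := by
  set y : EuclideanSpace ℂ (Fin N) := Matrix.toEuclideanLin U w with hy
  have hcpx : ∑ i, (starRingEnd ℂ) (y i) * y i = ∑ j, (starRingEnd ℂ) (w j) * w j := by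
    have hyi : ∀ i, y i = ∑ j, U i j * w j := fun i => toEuclideanLin_apply' U w i
    calc ∑ i, (starRingEnd ℂ) (y i) * y i
        = ∑ i, ∑ j, ∑ j', ((starRingEnd ℂ) (U i j) * (starRingEnd ℂ) (w j)) * (U i j' * w j') := by
          refine Finset.sum_congr rfl fun i _ => ?_
          rw [hyi i, map_sum, Finset.sum_mul]
          refine Finset.sum_congr rfl fun j _ => ?_
          rw [Finset.mul_sum]
          refine Finset.sum_congr rfl fun j' _ => ?_
          rw [map_mul]
      _ = ∑ j, ∑ j', ((starRingEnd ℂ) (w j) * w j') * ∑ i, (starRingEnd ℂ) (U i j) * U i j' := by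
          rw [Finset.sum_comm]
          refine Finset.sum_congr rfl fun j _ => ?_
          rw [Finset.sum_comm]
          refine Finset.sum_congr rfl fun j' _ => ?_
          rw [Finset.mul_sum]
          refine Finset.sum_congr rfl fun i _ => ?_
          ring
      _ = ∑ j, (starRingEnd ℂ) (w j) * w j := by
          refine Finset.sum_congr rfl fun j _ => ?_
          rw [Finset.sum_eq_single j]
          · rw [hcol j j]; simp
          · intro j' _ hne
            rw [hcol j j', if_neg (by exact fun h => hne h.symm)]
            simp
          · simp
  have hre' : ∑ i, ((‖y i‖^2 : ℝ) : ℂ) = ∑ j, ((‖w j‖^2 : ℝ) : ℂ) := by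
    calc ∑ i, ((‖y i‖^2 : ℝ) : ℂ) = ∑ i, (starRingEnd ℂ) (y i) * y i :=
          Finset.sum_congr rfl fun i _ => (conj_mul_self' _).symm
      _ = ∑ j, (starRingEnd ℂ) (w j) * w j := hcpx
      _ = ∑ j, ((‖w j‖^2 : ℝ) : ℂ) := Finset.sum_congr rfl fun j _ => conj_mul_self' _
  have hre : ((∑ i, ‖y i‖^2 : ℝ) : ℂ) = ((∑ j, ‖w j‖^2 : ℝ) : ℂ) := by
    push_cast
    push_cast at hre'
    exact hre'
  exact Complex.ofReal_injective hre

include hcol in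
lemma opNorm_submatrix_le_one {n m : ℕ} (f : Fin n ↪ Fin N) (g : Fin m ↪ Fin N) :
    opNorm (U.submatrix ⇑f ⇑g) ≤ 1 := by
  classical
  rw [opNorm]
  refine ContinuousLinearMap.opNorm_le_bound _ zero_le_one fun y => ?_
  rw [one_mul, LinearMap.coe_toContinuousLinearMap']
  set ytil : EuclideanSpace ℂ (Fin N) := WithLp.toLp 2 (fun l => ∑ j, if g j = l then y j else 0) with hyt
  have hyti : ∀ l, ytil l = ∑ j, if g j = l then y j else 0 := fun l => rfl
  have h1 : ∀ i, (Matrix.toEuclideanLin (U.submatrix ⇑f ⇑g) y) i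
      = (Matrix.toEuclideanLin U ytil) (f i) := by
    intro i
    rw [toEuclideanLin_apply', toEuclideanLin_apply']
    calc ∑ j, U.submatrix (⇑f) (⇑g) i j * y j
        = ∑ j, ∑ l, if g j = l then U (f i) l * y j else 0 := by
          refine Finset.sum_congr rfl fun j _ => ?_
          rw [Finset.sum_ite_eq]
          simp [Matrix.submatrix_apply]
      _ = ∑ l, ∑ j, if g j = l then U (f i) l * y j else 0 := Finset.sum_comm
      _ = ∑ l, U (f i) l * ytil l := by
          refine Finset.sum_congr rfl fun l _ => ?_
          rw [hyti l, Finset.mul_sum]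
          refine Finset.sum_congr rfl fun j _ => ?_
          split <;> simp
  have h2 : ∑ l, ‖ytil l‖^2 = ∑ j, ‖y j‖^2 := by
    have hz : ∀ l, l ∉ Finset.univ.map g → ‖ytil l‖^2 = 0 := by
      intro l hl
      have : ytil l = 0 := by
        rw [hyti l]
        refine Finset.sum_eq_zero fun j _ => ?_
        rw [if_neg]
        intro h
        exact hl (Finset.mem_map.mpr ⟨j, Finset.mem_univ _, h⟩)
      rw [this]; simp
    rw [← Finset.sum_subset (Finset.subset_univ (Finset.univ.map g)) (fun l _ hl => hz l hl),
      Finset.sum_map]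
    refine Finset.sum_congr rfl fun j _ => ?_
    have : ytil (g j) = y j := by
      rw [hyti]
      rw [Finset.sum_eq_single j]
      · simp
      · intro j' _ hne
        rw [if_neg (fun h => hne (g.injective h))]
      · simp
    rw [this]
  have h3 : ∑ i, ‖(Matrix.toEuclideanLin (U.submatrix ⇑f ⇑g) y) i‖^2 ≤ ∑ j, ‖y j‖^2 := by
    calc ∑ i, ‖(Matrix.toEuclideanLin (U.submatrix ⇑f ⇑g) y) i‖^2
        = ∑ i, ‖(Matrix.toEuclideanLin U ytil) (f i)‖^2 := by
          exact Finset.sum_congr rfl fun i _ => by rw [h1 i]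
      _ = ∑ l ∈ Finset.univ.map f, ‖(Matrix.toEuclideanLin U ytil) l‖^2 := by
          rw [Finset.sum_map]
      _ ≤ ∑ l, ‖(Matrix.toEuclideanLin U ytil) l‖^2 :=
          Finset.sum_le_sum_of_subset_of_nonneg (Finset.subset_univ _)
            (fun l _ _ => sq_nonneg _)
      _ = ∑ l, ‖ytil l‖^2 := mulVec_normsq hcol ytil
      _ = ∑ j, ‖y j‖^2 := h2
  rw [EuclideanSpace.norm_eq, EuclideanSpace.norm_eq]
  exact Real.sqrt_le_sqrt h3

include hcol in
lemma sk_le_one (k : ℕ) : sk N U k ≤ 1 :=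
  Real.iSup_le (fun _ => Real.iSup_le (fun _ => Real.iSup_le
    (fun g => opNorm_submatrix_le_one hcol _ g) zero_le_one) zero_le_one) zero_le_one

end Iso

lemma opNorm_le_sk (N k n m : ℕ) (U : Matrix (Fin N) (Fin N) ℂ)
    (hn : 1 ≤ n) (hm : 1 ≤ m) (hnm : n + m = k + 1)
    (f : Fin n ↪ Fin N) (g : Fin m ↪ Fin N) :
    opNorm (U.submatrix ⇑f ⇑g) ≤ sk N U k := by
  have hk : n - 1 < k := by omega
  have h1 : opNorm (U.submatrix ⇑f ⇑g) ≤ maxSubNorm N n m U := by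
    calc opNorm (U.submatrix ⇑f ⇑g)
        ≤ ⨆ g' : Fin m ↪ Fin N, opNorm (U.submatrix ⇑f ⇑g') :=
          le_ciSup (f := fun g' : Fin m ↪ Fin N => opNorm (U.submatrix ⇑f ⇑g')) (bddFin _) g
      _ ≤ maxSubNorm N n m U :=
          le_ciSup (f := fun f' : Fin n ↪ Fin N =>
            ⨆ g' : Fin m ↪ Fin N, opNorm (U.submatrix ⇑f' ⇑g')) (bddFin _) f
  have h2 : maxSubNorm N n m U ≤ sk N U k := by
    have h := le_ciSup (f := fun a : Fin k => maxSubNorm N (a.1 + 1) (k - a.1) U)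
      (bddFin _) ⟨n - 1, hk⟩
    have e1 : n - 1 + 1 = n := by omega
    have e2 : k - (n - 1) = m := by omega
    rw [show ((⟨n - 1, hk⟩ : Fin k)).1 = n - 1 from rfl, e1, e2] at h
    exact h
  linarith

lemma one_le_skN (N : ℕ) (hN : 1 ≤ N) (U : Matrix (Fin N) (Fin N) ℂ)
    (hcol : ∀ j j' : Fin N, ∑ l, (starRingEnd ℂ) (U l j) * U l j' = if j = j' then 1 else 0) :
    1 ≤ sk N U N := by
  set z : Fin N := ⟨0, hN⟩ with hz
  set g : Fin 1 ↪ Fin N := ⟨fun _ => z, fun x y _ => Subsingleton.elim x y⟩ with hg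
  set f : Fin N ↪ Fin N := Function.Embedding.refl _ with hf
  set M := U.submatrix ⇑f ⇑g with hM
  set y : EuclideanSpace ℂ (Fin 1) := WithLp.toLp 2 (fun _ => (1:ℂ)) with hyd
  have hy0 : ∀ t : Fin 1, y t = 1 := fun _ => rfl
  have hy1 : ‖y‖ = 1 := by
    rw [EuclideanSpace.norm_eq]
    rw [Fin.sum_univ_one, hy0 0]
    simp
  have hcolsum : ∑ l, ‖U l z‖^2 = 1 := by
    have h := hcol z z
    rw [if_pos rfl] at h
    have h2 : ∑ l, ((‖U l z‖^2 : ℝ) : ℂ) = 1 := by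
      rw [← h]
      exact Finset.sum_congr rfl fun l _ => (conj_mul_self' _).symm
    exact_mod_cast h2
  have hMy : ‖Matrix.toEuclideanLin M y‖ = 1 := by
    rw [EuclideanSpace.norm_eq]
    have : ∀ i, (Matrix.toEuclideanLin M y) i = U i z := by
      intro i
      rw [toEuclideanLin_apply']
      rw [Fin.sum_univ_one, hy0 0, mul_one]
      rfl
    rw [Finset.sum_congr rfl fun i _ => by rw [this i]]
    rw [hcolsum]
    exact Real.sqrt_one
  have hop : 1 ≤ opNorm M := by
    have h := norm_mulVec_le M y
    rw [hMy, hy1, mul_one] at h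
    exact h
  have h1 : opNorm M ≤ maxSubNorm N N 1 U := by
    calc opNorm M
        ≤ ⨆ g' : Fin 1 ↪ Fin N, opNorm (U.submatrix ⇑f ⇑g') :=
          le_ciSup (f := fun g' : Fin 1 ↪ Fin N => opNorm (U.submatrix ⇑f ⇑g')) (bddFin _) g
      _ ≤ maxSubNorm N N 1 U :=
          le_ciSup (f := fun f' : Fin N ↪ Fin N =>
            ⨆ g' : Fin 1 ↪ Fin N, opNorm (U.submatrix ⇑f' ⇑g')) (bddFin _) f
  have h2 : maxSubNorm N N 1 U ≤ sk N U N := by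
    have hk : N - 1 < N := by omega
    have h := le_ciSup (f := fun a : Fin N => maxSubNorm N (a.1 + 1) (N - a.1) U)
      (bddFin _) ⟨N - 1, hk⟩
    have e1 : N - 1 + 1 = N := by omega
    have e2 : N - (N - 1) = 1 := by omega
    rw [show ((⟨N - 1, hk⟩ : Fin N)).1 = N - 1 from rfl, e1, e2] at h
    exact h
  linarith

lemma pq_bound {P Q s : ℝ} (hP0 : 0 ≤ P) (hQ0 : 0 ≤ Q) (hs0 : 0 ≤ s)
    (hmain : (P+Q)^2 ≤ (1+s)*(P+Q)) : P*Q ≤ ((1+s)/2)^2 := by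
  have hPQ1s : P + Q ≤ 1 + s := by
    rcases eq_or_lt_of_le (add_nonneg hP0 hQ0) with h | h
    · linarith
    · nlinarith
  nlinarith [sq_nonneg (P - Q)]
lemma key_lemma (N n m : ℕ) (U : Matrix (Fin N) (Fin N) ℂ)
    (hcol : ∀ j j' : Fin N, ∑ l, (starRingEnd ℂ) (U l j) * U l j' = if j = j' then 1 else 0)
    (u v : EuclideanSpace ℂ (Fin N)) (hu : ‖u‖ = 1)
    (hv : ∀ j, v j = ∑ i, (starRingEnd ℂ) (U i j) * u i)
    (f : Fin n ↪ Fin N) (g : Fin m ↪ Fin N) :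
    (∑ i, ‖u (f i)‖^2) * (∑ j, ‖v (g j)‖^2) ≤
      ((1 + opNorm (U.submatrix ⇑f ⇑g))/2)^2 := by
  classical
  set s := opNorm (U.submatrix ⇑f ⇑g) with hs
  have hs0 : 0 ≤ s := norm_nonneg _
  set P := ∑ i, ‖u (f i)‖^2 with hP
  set Q := ∑ j, ‖v (g j)‖^2 with hQ
  have hP0 : 0 ≤ P := Finset.sum_nonneg fun i _ => sq_nonneg _
  have hQ0 : 0 ≤ Q := Finset.sum_nonneg fun j _ => sq_nonneg _
  set x : EuclideanSpace ℂ (Fin N) := WithLp.toLp 2 (fun i => if i ∈ Finset.univ.map f then u i else 0) with hx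
  set w : EuclideanSpace ℂ (Fin N) := WithLp.toLp 2 (fun j => if j ∈ Finset.univ.map g then v j else 0) with hw
  set y : EuclideanSpace ℂ (Fin N) := Matrix.toEuclideanLin U w with hy
  have hxi : ∀ i, x i = if i ∈ Finset.univ.map f then u i else 0 := fun i => rfl
  have hwi : ∀ j, w j = if j ∈ Finset.univ.map g then v j else 0 := fun j => rfl
  -- ‖x‖² = P
  have hxnorm : ‖x‖^2 = P := by
    rw [euclidean_norm_sq]
    have : ∀ i, ‖x i‖^2 = if i ∈ Finset.univ.map f then ‖u i‖^2 else 0 := by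
      intro i; rw [hxi i]; by_cases h : i ∈ Finset.univ.map f
      · rw [if_pos h, if_pos h]
      · rw [if_neg h, if_neg h]; simp
    rw [Finset.sum_congr rfl fun i _ => this i, Finset.sum_ite_mem,
      Finset.univ_inter, Finset.sum_map]
  -- ∑‖w‖² = Q
  have hwnorm : ‖w‖^2 = Q := by
    rw [euclidean_norm_sq]
    have : ∀ j, ‖w j‖^2 = if j ∈ Finset.univ.map g then ‖v j‖^2 else 0 := by
      intro j; rw [hwi j]; by_cases h : j ∈ Finset.univ.map g
      · rw [if_pos h, if_pos h]
      · rw [if_neg h, if_neg h]; simp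
    rw [Finset.sum_congr rfl fun j _ => this j, Finset.sum_ite_mem,
      Finset.univ_inter, Finset.sum_map]
  -- ‖y‖² = Q  (unitarity)
  have hynorm : ‖y‖^2 = Q := by
    have hcpx : ∑ i, (starRingEnd ℂ) (y i) * y i = ∑ j, (starRingEnd ℂ) (w j) * w j := by
      have hyi : ∀ i, y i = ∑ j, U i j * w j := fun i => toEuclideanLin_apply' U w i
      calc ∑ i, (starRingEnd ℂ) (y i) * y i
          = ∑ i, ∑ j, ∑ j', ((starRingEnd ℂ) (U i j) * (starRingEnd ℂ) (w j)) * (U i j' * w j') := by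
            refine Finset.sum_congr rfl fun i _ => ?_
            rw [hyi i, map_sum, Finset.sum_mul]
            refine Finset.sum_congr rfl fun j _ => ?_
            rw [Finset.mul_sum]
            refine Finset.sum_congr rfl fun j' _ => ?_
            rw [map_mul]
        _ = ∑ j, ∑ j', ((starRingEnd ℂ) (w j) * w j') * ∑ i, (starRingEnd ℂ) (U i j) * U i j' := by
            rw [Finset.sum_comm]
            refine Finset.sum_congr rfl fun j _ => ?_
            rw [Finset.sum_comm]
            refine Finset.sum_congr rfl fun j' _ => ?_
            rw [Finset.mul_sum]
            refine Finset.sum_congr rfl fun i _ => ?_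
            ring
        _ = ∑ j, (starRingEnd ℂ) (w j) * w j := by
            refine Finset.sum_congr rfl fun j _ => ?_
            rw [Finset.sum_eq_single j]
            · rw [hcol j j]; simp
            · intro j' _ hne
              rw [hcol j j', if_neg (by exact fun h => hne h.symm)]
              simp
            · simp
    have hre' : ∑ i, ((‖y i‖^2 : ℝ) : ℂ) = ∑ j, ((‖w j‖^2 : ℝ) : ℂ) := by
      calc ∑ i, ((‖y i‖^2 : ℝ) : ℂ) = ∑ i, (starRingEnd ℂ) (y i) * y i :=
            Finset.sum_congr rfl fun i _ => (conj_mul_self' _).symm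
        _ = ∑ j, (starRingEnd ℂ) (w j) * w j := hcpx
        _ = ∑ j, ((‖w j‖^2 : ℝ) : ℂ) := Finset.sum_congr rfl fun j _ => conj_mul_self' _
    have hre : ((∑ i, ‖y i‖^2 : ℝ) : ℂ) = ((∑ j, ‖w j‖^2 : ℝ) : ℂ) := by
      push_cast
      push_cast at hre'
      exact hre'
    have := Complex.ofReal_injective hre
    rw [euclidean_norm_sq, this, ← euclidean_norm_sq, hwnorm]
  -- inner x u = P
  have hinnerxu : (inner ℂ x u : ℂ) = ((P : ℝ) : ℂ) := by
    rw [cinner_apply]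
    have : ∀ i, (starRingEnd ℂ) (x i) * u i
        = if i ∈ Finset.univ.map f then ((‖u i‖^2 : ℝ) : ℂ) else 0 := by
      intro i; rw [hxi i]; by_cases h : i ∈ Finset.univ.map f
      · rw [if_pos h, if_pos h, conj_mul_self']
      · rw [if_neg h, if_neg h]; simp
    rw [Finset.sum_congr rfl fun i _ => this i, Finset.sum_ite_mem,
      Finset.univ_inter, Finset.sum_map, hP]
    push_cast
    rfl
  -- inner y u = Q
  have hinneryu : (inner ℂ y u : ℂ) = ((Q : ℝ) : ℂ) := by
    rw [cinner_apply]
    have hyi : ∀ i, y i = ∑ j, U i j * w j := fun i => toEuclideanLin_apply' U w i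
    calc ∑ i, (starRingEnd ℂ) (y i) * u i
        = ∑ i, ∑ j, (starRingEnd ℂ) (w j) * ((starRingEnd ℂ) (U i j) * u i) := by
          refine Finset.sum_congr rfl fun i _ => ?_
          rw [hyi i, map_sum, Finset.sum_mul]
          refine Finset.sum_congr rfl fun j _ => ?_
          rw [map_mul]; ring
      _ = ∑ j, (starRingEnd ℂ) (w j) * v j := by
          rw [Finset.sum_comm]
          refine Finset.sum_congr rfl fun j _ => ?_
          rw [hv j, Finset.mul_sum]
      _ = ((Q : ℝ) : ℂ) := by
          have : ∀ j, (starRingEnd ℂ) (w j) * v j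
              = if j ∈ Finset.univ.map g then ((‖v j‖^2 : ℝ) : ℂ) else 0 := by
            intro j; rw [hwi j]; by_cases h : j ∈ Finset.univ.map g
            · rw [if_pos h, if_pos h, conj_mul_self']
            · rw [if_neg h, if_neg h]; simp
          rw [Finset.sum_congr rfl fun j _ => this j, Finset.sum_ite_mem,
            Finset.univ_inter, Finset.sum_map, hQ]
          push_cast
          rfl
  -- Cauchy-Schwarz for the submatrix pairing
  have hxy : ‖(inner ℂ x y : ℂ)‖ ≤ s * (Real.sqrt P * Real.sqrt Q) := by
    set c : EuclideanSpace ℂ (Fin n) := WithLp.toLp 2 (fun i => u (f i)) with hc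
    set d : EuclideanSpace ℂ (Fin m) := WithLp.toLp 2 (fun j => v (g j)) with hd
    have heq : (inner ℂ x y : ℂ) = inner ℂ c (Matrix.toEuclideanLin (U.submatrix ⇑f ⇑g) d) := by
      rw [cinner_apply, cinner_apply]
      have hyi : ∀ i, y i = ∑ j, U i j * w j := fun i => toEuclideanLin_apply' U w i
      have hstep : ∀ i, (starRingEnd ℂ) (x i) * y i
          = if i ∈ Finset.univ.map f then (starRingEnd ℂ) (u i) * ∑ j, U i j * w j else 0 := by
        intro i; rw [hxi i]; by_cases h : i ∈ Finset.univ.map f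
        · rw [if_pos h, if_pos h, hyi i]
        · rw [if_neg h, if_neg h]; simp
      rw [Finset.sum_congr rfl fun i _ => hstep i, Finset.sum_ite_mem,
        Finset.univ_inter, Finset.sum_map]
      refine Finset.sum_congr rfl fun i _ => ?_
      rw [toEuclideanLin_apply']
      have hws : ∀ j, U (f i) j * w j
          = if j ∈ Finset.univ.map g then U (f i) j * v j else 0 := by
        intro j; rw [hwi j]; by_cases h : j ∈ Finset.univ.map g
        · rw [if_pos h, if_pos h]
        · rw [if_neg h, if_neg h]; simp
      have hwsum : ∑ j, U (f i) j * w j = ∑ j : Fin m, (U.submatrix ⇑f ⇑g) i j * d j := by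
        rw [Finset.sum_congr rfl fun j _ => hws j, Finset.sum_ite_mem,
          Finset.univ_inter, Finset.sum_map]
        rfl
      rw [hwsum]
    have hcnorm : ‖c‖ = Real.sqrt P := by
      rw [EuclideanSpace.norm_eq, hP]
    have hdnorm : ‖d‖ = Real.sqrt Q := by
      rw [EuclideanSpace.norm_eq, hQ]
    calc ‖(inner ℂ x y : ℂ)‖ = ‖(inner ℂ c (Matrix.toEuclideanLin (U.submatrix ⇑f ⇑g) d) : ℂ)‖ := by
          rw [heq]
      _ ≤ ‖c‖ * ‖Matrix.toEuclideanLin (U.submatrix ⇑f ⇑g) d‖ := norm_inner_le_norm _ _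
      _ ≤ ‖c‖ * (s * ‖d‖) := by
          refine mul_le_mul_of_nonneg_left (norm_mulVec_le _ _) (norm_nonneg _)
      _ = s * (Real.sqrt P * Real.sqrt Q) := by rw [hcnorm, hdnorm]; ring
  -- P + Q ≤ ‖x + y‖
  have hPQle : P + Q ≤ ‖x + y‖ := by
    have h1 : (inner ℂ (x + y) u : ℂ) = ((P : ℝ) : ℂ) + ((Q : ℝ) : ℂ) := by
      rw [inner_add_left, hinnerxu, hinneryu]
    have h2 : P + Q = Complex.re (inner ℂ (x + y) u : ℂ) := by
      rw [h1]; simp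
    rw [h2]
    calc Complex.re (inner ℂ (x + y) u : ℂ) ≤ ‖(inner ℂ (x + y) u : ℂ)‖ := Complex.re_le_norm _
      _ ≤ ‖x + y‖ * ‖u‖ := norm_inner_le_norm _ _
      _ = ‖x + y‖ := by rw [hu, mul_one]
  -- ‖x+y‖² = P + Q + 2 re⟪x,y⟫
  have hnormsq : ‖x + y‖^2 = P + Q + 2 * Complex.re (inner ℂ x y : ℂ) := by
    have := @norm_add_sq ℂ _ _ _ _ x y
    rw [this, hxnorm, hynorm]
    simp only [RCLike.re_to_complex]
    ring
  -- combine
  have hsqrt : 2 * Real.sqrt P * Real.sqrt Q ≤ P + Q := by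
    nlinarith [sq_nonneg (Real.sqrt P - Real.sqrt Q), Real.sq_sqrt hP0, Real.sq_sqrt hQ0]
  have hre_le : Complex.re (inner ℂ x y : ℂ) ≤ s * (P + Q) / 2 := by
    calc Complex.re (inner ℂ x y : ℂ) ≤ ‖(inner ℂ x y : ℂ)‖ := Complex.re_le_norm _
      _ ≤ s * (Real.sqrt P * Real.sqrt Q) := hxy
      _ ≤ s * ((P + Q)/2) := by
          refine mul_le_mul_of_nonneg_left ?_ hs0
          nlinarith
      _ = s * (P + Q) / 2 := by ring
  have hmain : (P + Q)^2 ≤ (1 + s) * (P + Q) := by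
    have h1 : (P + Q)^2 ≤ ‖x + y‖^2 :=
      pow_le_pow_left₀ (by positivity) hPQle 2
    calc (P + Q)^2 ≤ ‖x + y‖^2 := h1
      _ = P + Q + 2 * Complex.re (inner ℂ x y : ℂ) := hnormsq
      _ ≤ P + Q + 2 * (s * (P + Q) / 2) := by linarith
      _ = (1 + s) * (P + Q) := by ring
  exact pq_bound hP0 hQ0 hs0 hmain
lemma comb_lemma (N k : ℕ) (hk : 1 ≤ k) (p q : Fin N → ℝ)
    (hp : ∀ i, 0 ≤ p i) (hq : ∀ j, 0 ≤ q j)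
    (hpa : Antitone p) (hqa : Antitone q)
    (T : Finset (Fin N × Fin N)) (hT : T.card ≤ k) :
    ∃ I J : Finset (Fin N), I.card + J.card ≤ k + 1 ∧ I.card ≤ k ∧ J.card ≤ k ∧
      ∑ ij ∈ T, p ij.1 * q ij.2 ≤ (∑ i ∈ I, p i) * (∑ j ∈ J, q j) := by
  classical
  set v : Finset (Fin N × Fin N) → ℝ := fun T' => ∑ ij ∈ T', p ij.1 * q ij.2 with hv
  set 𝒮 : Finset (Finset (Fin N × Fin N)) :=
    Finset.univ.filter (fun T' => T'.card ≤ k ∧ v T ≤ v T') with h𝒮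
  have hTmem : T ∈ 𝒮 := by simp [h𝒮, hT]
  obtain ⟨T₀, hT₀mem, hT₀min⟩ := Finset.exists_min_image 𝒮
    (fun T' => ∑ ij ∈ T', (ij.1.1 + ij.2.1)) ⟨T, hTmem⟩
  rw [h𝒮, Finset.mem_filter] at hT₀mem
  obtain ⟨-, hT₀card, hT₀val⟩ := hT₀mem
  -- downward closedness
  have hdc : ∀ i j i' j', (i, j) ∈ T₀ → i' ≤ i → j' ≤ j → (i', j') ∈ T₀ := by
    intro i j i' j' hij hi hj
    by_contra hne
    have hne2 : ¬(i' = i ∧ j' = j) := by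
      rintro ⟨rfl, rfl⟩; exact hne hij
    set T₁ := insert (i', j') (T₀.erase (i, j)) with hT₁
    have hmem1 : (i', j') ∉ T₀.erase (i, j) := fun h => hne (Finset.mem_of_mem_erase h)
    have hcard1 : T₁.card = T₀.card := by
      rw [hT₁, Finset.card_insert_of_notMem hmem1, Finset.card_erase_of_mem hij]
      have : 0 < T₀.card := Finset.card_pos.mpr ⟨_, hij⟩
      omega
    have hvT₁ : v T₀ ≤ v T₁ := by
      have hle : p i * q j ≤ p i' * q j' :=
        mul_le_mul (hpa hi) (hqa hj) (hq j) (hp i')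
      have e1 : v T₁ = p i' * q j' + (v T₀ - p i * q j) := by
        rw [hv]; simp only []
        rw [hT₁, Finset.sum_insert hmem1, Finset.sum_erase_eq_sub hij]
      rw [e1]; linarith
    have hmem𝒮 : T₁ ∈ 𝒮 := by
      rw [h𝒮, Finset.mem_filter]
      exact ⟨Finset.mem_univ _, by omega, le_trans hT₀val hvT₁⟩
    have hφ : (∑ ij ∈ T₁, (ij.1.1 + ij.2.1)) < ∑ ij ∈ T₀, (ij.1.1 + ij.2.1) := by
      have h1 : i'.1 + j'.1 < i.1 + j.1 := by
        have hi' : i'.1 ≤ i.1 := hi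
        have hj' : j'.1 ≤ j.1 := hj
        rcases Nat.lt_or_ge (i'.1 + j'.1) (i.1 + j.1) with h | h
        · exact h
        · exfalso
          exact hne2 ⟨Fin.ext (by omega), Fin.ext (by omega)⟩
      have e1 : ∑ ij ∈ T₁, (ij.1.1 + ij.2.1) = (i'.1 + j'.1) + ∑ ij ∈ T₀.erase (i,j), (ij.1.1 + ij.2.1) := Finset.sum_insert hmem1
      have e2 : ∑ ij ∈ T₀, (ij.1.1 + ij.2.1) = (i.1 + j.1) + ∑ ij ∈ T₀.erase (i,j), (ij.1.1 + ij.2.1) := (Finset.add_sum_erase _ _ hij).symm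
      omega
    exact absurd (hT₀min T₁ hmem𝒮) (by omega)
  -- conclude
  set I := T₀.image Prod.fst with hI
  set J := T₀.image Prod.snd with hJ
  have hsub : T₀ ⊆ I ×ˢ J := by
    intro ij hij
    rw [Finset.mem_product]
    exact ⟨Finset.mem_image_of_mem _ hij, Finset.mem_image_of_mem _ hij⟩
  have hsum : v T ≤ (∑ i ∈ I, p i) * (∑ j ∈ J, q j) := by
    calc v T ≤ v T₀ := hT₀val
    _ ≤ ∑ ij ∈ I ×ˢ J, p ij.1 * q ij.2 :=
        Finset.sum_le_sum_of_subset_of_nonneg hsub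
          (fun ij _ _ => mul_nonneg (hp _) (hq _))
    _ = (∑ i ∈ I, p i) * (∑ j ∈ J, q j) := by
        rw [Finset.sum_product, Finset.sum_mul]
        exact Finset.sum_congr rfl fun i _ => by rw [Finset.mul_sum]
  have hkey : I.card + J.card ≤ k + 1 ∧ I.card ≤ k ∧ J.card ≤ k := by
    rcases Finset.eq_empty_or_nonempty T₀ with hemp | ⟨⟨i₀, j₀⟩, hij₀⟩
    · have hIe : I = ∅ := by simp [hI, hemp]
      have hJe : J = ∅ := by simp [hJ, hemp]
      rw [hIe, hJe]; simp only [Finset.card_empty]; omega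
    · have hN : 0 < N := i₀.pos
      set z : Fin N := ⟨0, hN⟩ with hz
      have hzle : ∀ w : Fin N, z ≤ w := fun w => by
        rw [Fin.le_def]; exact Nat.zero_le _
      have hzz : (z, z) ∈ T₀ := hdc i₀ j₀ z z hij₀ (hzle _) (hzle _)
      set A := J.image (fun j => (z, j)) with hA
      set B := I.image (fun i => (i, z)) with hB
      have hAcard : A.card = J.card :=
        Finset.card_image_of_injective _ (fun x y h => (Prod.mk.injEq .. ▸ h).2)
      have hBcard : B.card = I.card :=
        Finset.card_image_of_injective _ (fun x y h => (Prod.mk.injEq .. ▸ h).1)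
      have hAsub : A ⊆ T₀ := by
        intro x hx
        rw [hA, Finset.mem_image] at hx
        obtain ⟨j, hj, rfl⟩ := hx
        rw [hJ, Finset.mem_image] at hj
        obtain ⟨ij, hij, rfl⟩ := hj
        exact hdc ij.1 ij.2 z ij.2 hij (hzle _) le_rfl
      have hBsub : B ⊆ T₀ := by
        intro x hx
        rw [hB, Finset.mem_image] at hx
        obtain ⟨i, hi, rfl⟩ := hx
        rw [hI, Finset.mem_image] at hi
        obtain ⟨ij, hij, rfl⟩ := hi
        exact hdc ij.1 ij.2 ij.1 z hij le_rfl (hzle _)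
      have hintersub : A ∩ B ⊆ {(z, z)} := by
        intro x hx
        rw [Finset.mem_inter] at hx
        obtain ⟨hxA, hxB⟩ := hx
        rw [hA, Finset.mem_image] at hxA
        rw [hB, Finset.mem_image] at hxB
        obtain ⟨j, -, rfl⟩ := hxA
        obtain ⟨i, -, h2⟩ := hxB
        have : i = z ∧ z = j := Prod.mk.injEq .. ▸ h2
        rw [Finset.mem_singleton, ← this.2]
      have hiCard : (A ∩ B).card ≤ 1 := by
        calc (A ∩ B).card ≤ ({(z,z)} : Finset _).card := Finset.card_le_card hintersub
        _ = 1 := Finset.card_singleton _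
      have hUcard : (A ∪ B).card ≤ k :=
        le_trans (Finset.card_le_card (Finset.union_subset hAsub hBsub)) hT₀card
      have hEq := Finset.card_union_add_card_inter A B
      have hIk : I.card ≤ k := hBcard ▸ le_trans (Finset.card_le_card hBsub) hT₀card
      have hJk : J.card ≤ k := hAcard ▸ le_trans (Finset.card_le_card hAsub) hT₀card
      exact ⟨by omega, hIk, hJk⟩
  exact ⟨I, J, hkey.1, hkey.2.1, hkey.2.2, hsum⟩

lemma finset_emb {N : ℕ} (s : Finset (Fin N)) :
    ∃ f : Fin s.card ↪ Fin N, ∀ x : Fin N → ℝ, ∑ i ∈ s, x i = ∑ t, x (f t) := by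
  refine ⟨⟨fun t => (s.orderIsoOfFin rfl t : Fin N), ?_⟩, fun x => ?_⟩
  · intro t1 t2 h
    exact (s.orderIsoOfFin rfl).injective (Subtype.ext h)
  · rw [← Finset.sum_attach s x, ← Finset.univ_eq_attach]
    exact (Equiv.sum_comp (s.orderIsoOfFin rfl).toEquiv (fun a => x ↑a)).symm

lemma opNorm_nonneg' {m n : Type*} [Fintype m] [Fintype n] [DecidableEq n]
    (M : Matrix m n ℂ) : 0 ≤ opNorm M := norm_nonneg _


/-- Tensor-product majorization: if `(a_i)` and `(b_j)` are orthonormal bases of `ℂ^N` with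
transition matrix `U_{ij} = ⟨a_i|b_j⟩`, then for any unit vector `ψ`, the `N²`-dimensional
vector `p^ψ ⊗ q^ψ` (with entries `p_i^ψ·q_j^ψ`, `p_i^ψ = |⟨a_i|ψ⟩|²`, `q_j^ψ = |⟨b_j|ψ⟩|²`)
is majorized by `Q = (R_1, R_2 − R_1, …, R_N − R_{N−1})` (padded with zeros). -/
theorem tensor_product_majorization
    (N : ℕ) (a b : OrthonormalBasis (Fin N) ℂ (EuclideanSpace ℂ (Fin N)))
    (U : Matrix (Fin N) (Fin N) ℂ) (hU : ∀ i j, U i j = (inner ℂ (a i) (b j) : ℂ))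
    (ψ : EuclideanSpace ℂ (Fin N)) (hψ : ‖ψ‖ = 1) :
    Majorizes
      (fun p : Fin N × Fin N =>
        ‖(inner ℂ (a p.1) ψ : ℂ)‖ ^ 2 * ‖(inner ℂ (b p.2) ψ : ℂ)‖ ^ 2)
      (Qvec N U) := by
  classical
  have hN : 1 ≤ N := by
    by_contra h
    push_neg at h
    have hN0 : N = 0 := by omega
    subst hN0
    have : ψ = 0 := by ext i; exact i.elim0
    rw [this, norm_zero] at hψ
    exact one_ne_zero hψ.symm
  set u : EuclideanSpace ℂ (Fin N) := a.repr ψ with hudef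
  set v : EuclideanSpace ℂ (Fin N) := b.repr ψ with hvdef
  have hui : ∀ i, u i = (inner ℂ (a i) ψ : ℂ) := fun i => a.repr_apply_apply ψ i
  have hvi : ∀ j, v j = (inner ℂ (b j) ψ : ℂ) := fun j => b.repr_apply_apply ψ j
  have hunorm : ‖u‖ = 1 := by rw [hudef, LinearIsometryEquiv.norm_map]; exact hψ
  have hvnorm : ‖v‖ = 1 := by rw [hvdef, LinearIsometryEquiv.norm_map]; exact hψ
  set p : Fin N → ℝ := fun i => ‖u i‖^2 with hpdef
  set q : Fin N → ℝ := fun j => ‖v j‖^2 with hqdef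
  have hp0 : ∀ i, 0 ≤ p i := fun i => sq_nonneg _
  have hq0 : ∀ j, 0 ≤ q j := fun j => sq_nonneg _
  have hfun : (fun pr : Fin N × Fin N =>
      ‖(inner ℂ (a pr.1) ψ : ℂ)‖ ^ 2 * ‖(inner ℂ (b pr.2) ψ : ℂ)‖ ^ 2)
      = fun pr => p pr.1 * q pr.2 := by
    funext pr
    rw [hpdef, hqdef]
    simp only [hui, hvi]
  have hcol : ∀ j j' : Fin N, ∑ l, (starRingEnd ℂ) (U l j) * U l j'
      = if j = j' then 1 else 0 := by
    intro j j'
    have hterm : ∀ l, (starRingEnd ℂ) (U l j) * U l j'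
        = (inner ℂ (b j) (a l) : ℂ) * (inner ℂ (a l) (b j') : ℂ) := by
      intro l
      rw [hU l j, hU l j', inner_conj_symm]
    rw [Finset.sum_congr rfl fun l _ => hterm l,
      OrthonormalBasis.sum_inner_mul_inner a (b j) (b j')]
    exact orthonormal_iff_ite.mp b.orthonormal j j'
  have hvrel : ∀ j, v j = ∑ i, (starRingEnd ℂ) (U i j) * u i := by
    intro j
    rw [hvi, ← OrthonormalBasis.sum_inner_mul_inner a (b j) ψ]
    refine Finset.sum_congr rfl fun i _ => ?_
    rw [hU i j, inner_conj_symm, hui]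
  have htotp : ∑ i, p i = 1 := by
    have := euclidean_norm_sq u
    rw [hunorm] at this
    simpa using this.symm
  have htotq : ∑ j, q j = 1 := by
    have := euclidean_norm_sq v
    rw [hvnorm] at this
    simpa using this.symm
  have htot : ∑ pr : Fin N × Fin N, p pr.1 * q pr.2 = 1 := by
    rw [Fintype.sum_prod_type]
    calc ∑ i, ∑ j, p i * q j = ∑ i, p i * ∑ j, q j := by
          refine Finset.sum_congr rfl fun i _ => ?_
          rw [Finset.mul_sum]
      _ = 1 := by rw [htotq]; simpa using htotp
  have hsk1 : sk N U N = 1 := le_antisymm (sk_le_one hcol N) (one_le_skN N hN U hcol)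
  have hRN : Rcoef N U N = 1 := by
    rw [Rcoef, if_neg (by omega), hsk1]
    norm_num
  have hQtel : ∀ k ≤ N, ∃ s₀ : Finset (Fin N), s₀.card = k ∧
      ∑ j ∈ s₀, Qvec N U j = Rcoef N U k := by
    intro k hkN
    refine ⟨Finset.univ.map ⟨fun t : Fin k => (⟨t.1, lt_of_lt_of_le t.2 hkN⟩ : Fin N),
      fun x y h => by apply Fin.ext; simpa using congrArg Fin.val h⟩, by simp, ?_⟩
    rw [Finset.sum_map]
    simp only [Function.Embedding.coeFn_mk, Qvec]
    change ∑ t : Fin k, (Rcoef N U (t.1 + 1) - Rcoef N U t.1) = _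
    rw [Fin.sum_univ_eq_sum_range (fun t => Rcoef N U (t + 1) - Rcoef N U t) k,
      Finset.sum_range_sub (fun t => Rcoef N U t)]
    simp [Rcoef]
  have hQsum : ∑ j, Qvec N U j = 1 := by
    obtain ⟨s₀, hcard, hsum⟩ := hQtel N le_rfl
    have : s₀ = Finset.univ := Finset.eq_univ_of_card _ (by simpa using hcard)
    rw [← this, hsum, hRN]
  -- the main per-k estimate
  have hmainK : ∀ k, 1 ≤ k → k ≤ N → ∀ T : Finset (Fin N × Fin N), T.card ≤ k →
      ∑ ij ∈ T, p ij.1 * q ij.2 ≤ ((1 + sk N U k)/2)^2 := by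
    intro k hk1 hkN T hT
    -- sort
    set σ : Equiv.Perm (Fin N) := Tuple.sort (fun i => -(p i)) with hσ
    set τ : Equiv.Perm (Fin N) := Tuple.sort (fun j => -(q j)) with hτ
    have hpa : Antitone (fun i => p (σ i)) := by
      intro i j hij
      have := Tuple.monotone_sort (fun i => -(p i)) hij
      simp only [Function.comp_apply] at this
      simpa using neg_le_neg_iff.mp (by simpa using this)
    have hqa : Antitone (fun i => q (τ i)) := by
      intro i j hij
      have := Tuple.monotone_sort (fun j => -(q j)) hij
      simp only [Function.comp_apply] at this
      simpa using neg_le_neg_iff.mp (by simpa using this)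
    set e : Fin N × Fin N ≃ Fin N × Fin N := Equiv.prodCongr σ τ with he
    set T' : Finset (Fin N × Fin N) := T.image e.symm with hT'
    have hT'card : T'.card ≤ k := le_trans Finset.card_image_le hT
    have hsum' : ∑ ij ∈ T', p (σ ij.1) * q (τ ij.2) = ∑ ij ∈ T, p ij.1 * q ij.2 := by
      rw [hT', Finset.sum_image (fun x _ y _ h => e.symm.injective h)]
      refine Finset.sum_congr rfl fun ij _ => ?_
      rw [he]
      simp
    obtain ⟨I, J, hIJ, hIk, hJk, hle⟩ := comb_lemma N k hk1
      (fun i => p (σ i)) (fun j => q (τ j)) (fun i => hp0 _) (fun j => hq0 _)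
      hpa hqa T' hT'card
    set I' : Finset (Fin N) := I.image σ with hI'
    set J' : Finset (Fin N) := J.image τ with hJ'
    have hI'c : I'.card = I.card := Finset.card_image_of_injective _ σ.injective
    have hJ'c : J'.card = J.card := Finset.card_image_of_injective _ τ.injective
    have hsumI : ∑ i ∈ I, p (σ i) = ∑ i ∈ I', p i :=
      (Finset.sum_image (fun x _ y _ h => σ.injective h)).symm
    have hsumJ : ∑ j ∈ J, q (τ j) = ∑ j ∈ J', q j :=
      (Finset.sum_image (fun x _ y _ h => τ.injective h)).symm
    have hI'N : I'.card ≤ N := by simpa using Finset.card_le_univ I'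
    have hJ'N : J'.card ≤ N := by simpa using Finset.card_le_univ J'
    -- enlarge
    set m₁ : ℕ := max (max J'.card 1) (k+1-N) with hm₁
    set n₁ : ℕ := k+1-m₁ with hn₁
    have hm₁1 : 1 ≤ m₁ := by omega
    have hm₁N : m₁ ≤ N := by omega
    have hm₁J : J'.card ≤ m₁ := by omega
    have hn₁1 : 1 ≤ n₁ := by omega
    have hn₁N : n₁ ≤ N := by omega
    have hn₁I : I'.card ≤ n₁ := by omega
    have hnm : n₁ + m₁ = k + 1 := by omega
    obtain ⟨I₁, hI₁sub, hI₁card⟩ := Finset.exists_superset_card_eq hn₁I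
      (by rw [Fintype.card_fin]; exact hn₁N)
    obtain ⟨J₁, hJ₁sub, hJ₁card⟩ := Finset.exists_superset_card_eq hm₁J
      (by rw [Fintype.card_fin]; exact hm₁N)
    have hPmono : ∑ i ∈ I', p i ≤ ∑ i ∈ I₁, p i :=
      Finset.sum_le_sum_of_subset_of_nonneg hI₁sub (fun i _ _ => hp0 i)
    have hQmono : ∑ j ∈ J', q j ≤ ∑ j ∈ J₁, q j :=
      Finset.sum_le_sum_of_subset_of_nonneg hJ₁sub (fun j _ _ => hq0 j)
    obtain ⟨f, hf⟩ := finset_emb I₁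
    obtain ⟨g, hg⟩ := finset_emb J₁
    have hkey := key_lemma N I₁.card J₁.card U hcol u v hunorm hvrel f g
    have hsn : opNorm (U.submatrix ⇑f ⇑g) ≤ sk N U k :=
      opNorm_le_sk N k I₁.card J₁.card U (by omega) (by omega) (by omega) f g
    have hsq : ((1 + opNorm (U.submatrix ⇑f ⇑g))/2)^2 ≤ ((1 + sk N U k)/2)^2 := by
      have h0 : (0:ℝ) ≤ (1 + opNorm (U.submatrix ⇑f ⇑g))/2 := by
        have := opNorm_nonneg' (U.submatrix ⇑f ⇑g)
        linarith
      exact pow_le_pow_left₀ h0 (by linarith) 2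
    calc ∑ ij ∈ T, p ij.1 * q ij.2
        = ∑ ij ∈ T', p (σ ij.1) * q (τ ij.2) := hsum'.symm
      _ ≤ (∑ i ∈ I, p (σ i)) * (∑ j ∈ J, q (τ j)) := hle
      _ = (∑ i ∈ I', p i) * (∑ j ∈ J', q j) := by rw [hsumI, hsumJ]
      _ ≤ (∑ i ∈ I₁, p i) * (∑ j ∈ J₁, q j) := by
          refine mul_le_mul hPmono hQmono ?_ ?_
          · exact Finset.sum_nonneg fun j _ => hq0 j
          · exact Finset.sum_nonneg fun i _ => hp0 i
      _ = (∑ t, ‖u (f t)‖^2) * (∑ t, ‖v (g t)‖^2) := by rw [hf p, hg q]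
      _ ≤ ((1 + opNorm (U.submatrix ⇑f ⇑g))/2)^2 := hkey
      _ ≤ ((1 + sk N U k)/2)^2 := hsq
  constructor
  · intro k
    rw [hfun]
    rcases Nat.eq_zero_or_pos k with rfl | hk1
    · have h1 : topSum (fun pr : Fin N × Fin N => p pr.1 * q pr.2) 0 ≤ 0 := by
        refine topSum_le fun s hs => ?_
        rw [Finset.card_eq_zero.mp (le_antisymm hs (Nat.zero_le _))]
        simp
      have h2 : (0:ℝ) ≤ topSum (Qvec N U) 0 := by
        have := le_topSum (x := Qvec N U) (k := 0) ∅ (by simp)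
        simpa using this
      linarith
    · rcases le_or_gt k N with hkN | hNk
      · obtain ⟨s₀, hs₀card, hs₀sum⟩ := hQtel k hkN
        calc topSum (fun pr : Fin N × Fin N => p pr.1 * q pr.2) k
            ≤ ((1 + sk N U k)/2)^2 := topSum_le fun T hT => hmainK k hk1 hkN T hT
          _ = Rcoef N U k := by rw [Rcoef, if_neg (by omega)]
          _ = ∑ j ∈ s₀, Qvec N U j := hs₀sum.symm
          _ ≤ topSum (Qvec N U) k := le_topSum s₀ (le_of_eq hs₀card)
      · calc topSum (fun pr : Fin N × Fin N => p pr.1 * q pr.2) k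
            ≤ 1 := by
              refine topSum_le fun T _ => ?_
              calc ∑ ij ∈ T, p ij.1 * q ij.2
                  ≤ ∑ pr : Fin N × Fin N, p pr.1 * q pr.2 :=
                    Finset.sum_le_sum_of_subset_of_nonneg (Finset.subset_univ _)
                      (fun pr _ _ => mul_nonneg (hp0 _) (hq0 _))
                _ = 1 := htot
          _ = ∑ j, Qvec N U j := hQsum.symm
          _ ≤ topSum (Qvec N U) k := le_topSum Finset.univ (by simpa using le_of_lt hNk)
  · rw [hfun]
    rw [htot, hQsum]
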